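/- Let λ ∈ M_n(ℂ) with |λ(α,β)| = 1 for all α, β. Define v_{α,β} = n^{-1/2} Σ_{j=0}^{n-1} φ_n^{α(j-β)} e_{(j-β) mod n} ⊗ e_j with φ_n = exp(2πi/n). Then {v_{α,β}}_{α,β=0}^{n-1} is an orthonormal basis of ℂ^n ⊗ ℂ^n, and D_λ = Σ_{α,β} λ(α,β) v_{α,β} v_{α,β}^* is unitary with operator Schmidt rank Ω(D_λ) = |{(a,b) ∈ {0,...,n-1}² : λ̂(a,b) ≠ 0}|, where λ̂(a,b) = (1/n) Σ_{α,β} exp((2πi/n)(aα + bβ)) λ(α,β). -/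

import Mathlib

open Matrix Kronecker

/-- The realignment (reshuffling) of a bipartite operator. -/
def realign {n m : ℕ} (X : Matrix (Fin n × Fin m) (Fin n × Fin m) ℂ) :
    Matrix (Fin n × Fin n) (Fin m × Fin m) ℂ :=
  Matrix.of fun p q => X (p.1, q.1) (p.2, q.2)

/-- The operator Schmidt rank of a bipartite operator, i.e. the rank
of its realignment. -/
noncomputable def osr {n m : ℕ} (X : Matrix (Fin n × Fin m) (Fin n × Fin m) ℂ) : ℕ :=
  (realign X).rank

/-- The Fourier-basis vector `v_{α,β} = n^{-1/2} Σ_j φ_n^{α(j-β)} e_{j-β mod n} ⊗ e_j`. -/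
noncomputable def fVec (n : ℕ) (a b : Fin n) : Fin n × Fin n → ℂ :=
  fun p =>
    if (p.1 : ZMod n) = (p.2 : ZMod n) - (b : ZMod n) then
      (1 / Real.sqrt n) *
        Complex.exp (2 * Real.pi * Complex.I *
          (((a.val : ℤ) * ((p.2.val : ℤ) - (b.val : ℤ)) : ℤ) : ℂ) / n)
    else 0

/-- The unitary `D_λ = Σ_{α,β} λ(α,β) v_{α,β} v_{α,β}^*`. -/
noncomputable def Dlam {n : ℕ} (lam : Fin n → Fin n → ℂ) :
    Matrix (Fin n × Fin n) (Fin n × Fin n) ℂ :=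
  Matrix.of fun p q =>
    ∑ a : Fin n, ∑ b : Fin n, lam a b * fVec n a b p * (starRingEnd ℂ) (fVec n a b q)

/-- The discrete Fourier transform `λ̂(a,b) = (1/n) Σ_{α,β} exp((2πi/n)(aα+bβ)) λ(α,β)`. -/
noncomputable def lamHat {n : ℕ} (lam : Fin n → Fin n → ℂ) (a b : Fin n) : ℂ :=
  (1 / n) * ∑ x : Fin n, ∑ y : Fin n,
    Complex.exp (2 * Real.pi * Complex.I * ((a.val * x.val + b.val * y.val : ℕ) : ℂ) / n)
      * lam x y




noncomputable def ec (n : ℕ) (m : ℤ) : ℂ :=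
  Complex.exp (2 * Real.pi * Complex.I * (m : ℂ) / n)

lemma ec_mul (n : ℕ) (x y : ℤ) : ec n x * ec n y = ec n (x + y) := by
  rw [ec, ec, ec, ← Complex.exp_add]; congr 1; push_cast; ring

lemma ec_zero (n : ℕ) : ec n 0 = 1 := by simp [ec]

lemma ec_conj (n : ℕ) (x : ℤ) : (starRingEnd ℂ) (ec n x) = ec n (-x) := by
  rw [ec, ec, ← Complex.exp_conj]
  congr 1
  simp [map_div₀, Complex.conj_I, map_ofNat]

lemma ec_congr {n : ℕ} [NeZero n] {x y : ℤ} (h : ((x : ZMod n) = (y : ZMod n))) :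
    ec n x = ec n y := by
  have hd : (n : ℤ) ∣ y - x :=
    (ZMod.intCast_zmod_eq_zero_iff_dvd (y - x) n).mp (by push_cast; rw [← h]; ring)
  obtain ⟨k, hk⟩ := hd
  have hy : y = x + n * k := by linarith [hk]
  subst hy
  rw [← ec_mul]
  have h1 : ec n ((n:ℤ) * k) = 1 := by
    rw [ec]
    have hn : (n : ℂ) ≠ 0 := Nat.cast_ne_zero.mpr (NeZero.ne n)
    have harg : 2 * (Real.pi:ℂ) * Complex.I * (((n:ℤ) * k : ℤ) : ℂ) / n
        = (k:ℤ) * (2 * Real.pi * Complex.I) := by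
      field_simp; push_cast; ring
    rw [harg, Complex.exp_int_mul_two_pi_mul_I]
  rw [h1, mul_one]

lemma ec_pow (n : ℕ) (m : ℤ) (j : ℕ) : ec n (m * j) = (ec n m) ^ j := by
  rw [ec, ec, ← Complex.exp_nat_mul]; congr 1; push_cast; ring

lemma sum_ec {n : ℕ} [NeZero n] (m : ℤ) :
    ∑ j : Fin n, ec n (m * (j : ℕ)) = if (m : ZMod n) = 0 then (n : ℂ) else 0 := by
  by_cases h : (m : ZMod n) = 0
  · simp only [h, if_true]
    have he : ∀ j : Fin n, ec n (m * (j:ℕ)) = 1 := fun j => by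
      rw [show (1:ℂ) = ec n 0 from (ec_zero n).symm]
      exact ec_congr (by push_cast [h]; ring)
    simp [he]
  · simp only [h, if_false]
    have hz : ec n m ≠ 1 := by
      intro hc
      apply h
      rw [ec] at hc
      obtain ⟨k, hk⟩ := Complex.exp_eq_one_iff.mp hc
      have hn : (n : ℂ) ≠ 0 := Nat.cast_ne_zero.mpr (NeZero.ne n)
      have h2 : (2 * (Real.pi:ℂ) * Complex.I) ≠ 0 := by
        simp [Real.pi_ne_zero, Complex.I_ne_zero]
      have hmc : (m : ℂ) = (k : ℂ) * n := by
        field_simp at hk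
        apply mul_left_cancel₀ h2
        rw [hk]; ring
      have hmz : m = k * n := by exact_mod_cast hmc
      rw [hmz]
      push_cast
      simp
    have hterm : ∀ j : Fin n, ec n (m * (j:ℕ)) = (ec n m) ^ (j:ℕ) := fun j => ec_pow n m j
    rw [Finset.sum_congr rfl (fun j _ => hterm j)]
    rw [Fin.sum_univ_eq_sum_range (fun j => (ec n m)^j) n]
    rw [geom_sum_eq hz n]
    have hzn : (ec n m) ^ n = 1 := by
      rw [← ec_pow]
      rw [show (1:ℂ) = ec n 0 from (ec_zero n).symm]
      exact ec_congr (by push_cast; simp [ZMod.natCast_self])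
    rw [hzn]
    simp

noncomputable def sqc (n : ℕ) : ℂ := 1 / Real.sqrt n

lemma sqc_conj (n : ℕ) : (starRingEnd ℂ) (sqc n) = sqc n := by
  simp [sqc, map_div₀, Complex.conj_ofReal]

lemma sqc_mul_self {n : ℕ} [NeZero n] : sqc n * sqc n = 1 / (n : ℂ) := by
  rw [sqc, div_mul_div_comm, one_mul, ← Complex.ofReal_mul,
    Real.mul_self_sqrt (Nat.cast_nonneg n)]
  push_cast
  ring

def finZ {n : ℕ} [NeZero n] (c : ZMod n) : Fin n := ⟨c.val, ZMod.val_lt c⟩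

lemma finZ_cast {n : ℕ} [NeZero n] (c : ZMod n) : (((finZ c : Fin n) : ℕ) : ZMod n) = c :=
  ZMod.natCast_rightInverse c

lemma fin_cast_inj {n : ℕ} [NeZero n] {a b : Fin n} (h : ((a : ℕ) : ZMod n) = ((b : ℕ) : ZMod n)) :
    a = b := by
  have ha := ZMod.val_cast_of_lt a.isLt
  have hb := ZMod.val_cast_of_lt b.isLt
  apply Fin.ext
  rw [← ha, ← hb, h]

lemma sumCollapse {n : ℕ} [NeZero n] (c : ZMod n) (g : Fin n → ℂ) :
    (∑ x : Fin n, if ((x : ℕ) : ZMod n) = c then g x else 0) = g (finZ c) := by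
  rw [Finset.sum_eq_single (finZ c)]
  · rw [if_pos (finZ_cast c)]
  · intro x _ hx
    rw [if_neg]
    intro hc
    exact hx (fin_cast_inj (by rw [hc, finZ_cast]))
  · intro hx
    exact absurd (Finset.mem_univ _) hx


lemma fVec_eq (n : ℕ) (a b : Fin n) (p : Fin n × Fin n) :
    fVec n a b p = if ((p.1 : ℕ) : ZMod n) = ((p.2 : ℕ) : ZMod n) - ((b : ℕ) : ZMod n) then
      sqc n * ec n ((a : ℕ) * ((p.2 : ℕ) - (b : ℕ) : ℤ)) else 0 := rfl
lemma fVec_inner {n : ℕ} [NeZero n] (a b a' b' : Fin n) :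
    (∑ p : Fin n × Fin n, (starRingEnd ℂ) (fVec n a b p) * fVec n a' b' p)
      = if (a, b) = (a', b') then 1 else 0 := by
  simp only [fVec_eq, apply_ite (starRingEnd ℂ), map_zero, _root_.map_mul, sqc_conj, ec_conj,
    ite_mul, mul_ite, zero_mul, mul_zero]
  rw [Fintype.sum_prod_type, Finset.sum_comm]
  dsimp only
  by_cases hb : b = b'
  · subst hb
    simp only [← ite_and, and_self]
    rw [Finset.sum_congr rfl (fun j _ => sumCollapse _ _)]
    have hterm : ∀ j : Fin n,
        sqc n * ec n (-((a : ℕ) * ((j : ℕ) - (b : ℕ) : ℤ))) *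
          (sqc n * ec n ((a' : ℕ) * ((j : ℕ) - (b : ℕ) : ℤ)))
        = (1 / (n:ℂ)) * (ec n (-(((a' : ℕ) - (a : ℕ) : ℤ) * (b:ℕ))) *
            ec n ((((a' : ℕ) - (a : ℕ)) : ℤ) * (j:ℕ))) := by
      intro j
      rw [show sqc n * ec n (-((a : ℕ) * ((j : ℕ) - (b : ℕ) : ℤ))) *
          (sqc n * ec n ((a' : ℕ) * ((j : ℕ) - (b : ℕ) : ℤ)))
        = (sqc n * sqc n) * (ec n (-((a : ℕ) * ((j : ℕ) - (b : ℕ) : ℤ))) *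
            ec n ((a' : ℕ) * ((j : ℕ) - (b : ℕ) : ℤ))) from by ring]
      rw [sqc_mul_self, ec_mul, ec_mul]
      congr 2
      ring
    rw [Finset.sum_congr rfl (fun j _ => hterm j), ← Finset.mul_sum, ← Finset.mul_sum,
      sum_ec]
    by_cases ha : a = a'
    · subst ha
      simp only [sub_self, Int.cast_zero, zero_mul, neg_zero, ec_zero, eq_self_iff_true,
        if_true]
      have hn : (n : ℂ) ≠ 0 := Nat.cast_ne_zero.mpr (NeZero.ne n)
      field_simp
    · have hm : ¬ ((((a' : ℕ) - (a : ℕ) : ℤ) : ZMod n) = 0) := by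
        intro hc
        apply ha
        apply fin_cast_inj
        push_cast at hc
        rw [sub_eq_zero] at hc
        exact hc.symm
      rw [if_neg hm, if_neg (by simp [Prod.ext_iff]; intro h; exact absurd h ha)]
      ring
  · rw [if_neg (by simp [Prod.ext_iff]; intro _; exact hb)]
    apply Finset.sum_eq_zero
    intro j _
    apply Finset.sum_eq_zero
    intro k _
    split_ifs with h1 h2
    · exfalso
      apply hb
      apply fin_cast_inj
      have := h1.symm.trans h2
      exact sub_right_inj.mp this.symm
    · rfl
    · rfl
noncomputable def vmat (n : ℕ) : Matrix (Fin n × Fin n) (Fin n × Fin n) ℂ :=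
  Matrix.of fun p ab => fVec n ab.1 ab.2 p

lemma vmat_star_mul {n : ℕ} [NeZero n] : star (vmat n) * vmat n = 1 := by
  ext ab ab'
  rw [Matrix.mul_apply]
  simp only [Matrix.star_apply, vmat, Matrix.of_apply]
  rw [show (∑ p : Fin n × Fin n, star (fVec n ab.1 ab.2 p) * fVec n ab'.1 ab'.2 p)
      = ∑ p : Fin n × Fin n, (starRingEnd ℂ) (fVec n ab.1 ab.2 p) * fVec n ab'.1 ab'.2 p
      from rfl]
  rw [fVec_inner]
  rw [Matrix.one_apply]

lemma vmat_unitary {n : ℕ} [NeZero n] : vmat n ∈ Matrix.unitaryGroup (Fin n × Fin n) ℂ := by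
  rw [Matrix.mem_unitaryGroup_iff]
  rw [mul_eq_one_comm]
  exact vmat_star_mul

lemma fVec_orthonormal {n : ℕ} [NeZero n] :
    Orthonormal ℂ (fun ab : Fin n × Fin n =>
      ((WithLp.equiv 2 (Fin n × Fin n → ℂ)).symm (fVec n ab.1 ab.2) :
        EuclideanSpace ℂ (Fin n × Fin n))) := by
  rw [orthonormal_iff_ite]
  intro i j
  rw [PiLp.inner_apply]
  simp only [RCLike.inner_apply]
  show ∑ x, fVec n j.1 j.2 x * (starRingEnd ℂ) (fVec n i.1 i.2 x) = _
  simp_rw [mul_comm (fVec n j.1 j.2 _) _]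
  rw [fVec_inner]

lemma dlam_eq {n : ℕ} (lam : Fin n → Fin n → ℂ) :
    Dlam lam = vmat n * Matrix.diagonal (fun ab : Fin n × Fin n => lam ab.1 ab.2) * (vmat n)ᴴ := by
  ext p q
  rw [Matrix.mul_apply]
  simp only [Matrix.mul_diagonal, Matrix.conjTranspose_apply, vmat, Matrix.of_apply]
  rw [Dlam, Matrix.of_apply, Fintype.sum_prod_type]
  apply Finset.sum_congr rfl
  intro a _
  apply Finset.sum_congr rfl
  intro b _
  dsimp only
  simp only [RCLike.star_def]
  ring

lemma dlam_unitary {n : ℕ} [NeZero n] (lam : Fin n → Fin n → ℂ)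
    (hlam : ∀ a b, ‖lam a b‖ = 1) :
    Dlam lam ∈ Matrix.unitaryGroup (Fin n × Fin n) ℂ := by
  rw [dlam_eq]
  have hdiag : Matrix.diagonal (fun ab : Fin n × Fin n => lam ab.1 ab.2) ∈
      Matrix.unitaryGroup (Fin n × Fin n) ℂ := by
    rw [Matrix.mem_unitaryGroup_iff]
    rw [Matrix.star_eq_conjTranspose, Matrix.diagonal_conjTranspose, Matrix.diagonal_mul_diagonal]
    have hfun : (fun i : Fin n × Fin n =>
        lam i.1 i.2 * star (fun ab : Fin n × Fin n => lam ab.1 ab.2) i)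
        = fun _ => (1:ℂ) := by
      funext ab
      simp only [Pi.star_apply]
      rw [show star (lam ab.1 ab.2) = (starRingEnd ℂ) (lam ab.1 ab.2) from rfl]
      rw [Complex.mul_conj]
      norm_cast
      rw [Complex.normSq_eq_norm_sq, hlam]
      norm_num
    rw [hfun]
    exact Matrix.diagonal_one
  have hv := vmat_unitary (n := n)
  have hvh : (vmat n)ᴴ ∈ Matrix.unitaryGroup (Fin n × Fin n) ℂ := by
    rw [← Matrix.star_eq_conjTranspose]
    exact Unitary.star_mem hv
  exact mul_mem (mul_mem hv hdiag) hvh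
noncomputable def umat (n : ℕ) : Matrix (Fin n × Fin n) (Fin n × Fin n) ℂ :=
  Matrix.of fun p ab =>
    if ((p.2 : ℕ) : ZMod n) = ((p.1 : ℕ) : ZMod n) - ((ab.1 : ℕ) : ZMod n) then
      sqc n * ec n ((ab.2 : ℕ) * (p.1 : ℕ)) else 0

noncomputable def wmat (n : ℕ) : Matrix (Fin n × Fin n) (Fin n × Fin n) ℂ :=
  Matrix.of fun p ab =>
    if ((p.2 : ℕ) : ZMod n) = ((p.1 : ℕ) : ZMod n) - ((ab.1 : ℕ) : ZMod n) then
      sqc n * ec n (-((ab.2 : ℕ) * (p.1 : ℕ))) else 0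

lemma umat_inner {n : ℕ} [NeZero n] (a b a' b' : Fin n) :
    (∑ p : Fin n × Fin n, (starRingEnd ℂ) (umat n p (a, b)) * umat n p (a', b'))
      = if (a, b) = (a', b') then 1 else 0 := by
  simp only [umat, Matrix.of_apply, apply_ite (starRingEnd ℂ), map_zero, _root_.map_mul,
    sqc_conj, ec_conj, ite_mul, mul_ite, zero_mul, mul_zero]
  rw [Fintype.sum_prod_type]
  dsimp only
  by_cases ha : a = a'
  · subst ha
    simp only [← ite_and, and_self]
    rw [Finset.sum_congr rfl (fun i _ => sumCollapse _ _)]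
    have hterm : ∀ i : Fin n,
        sqc n * ec n (-((b : ℕ) * (i : ℕ))) * (sqc n * ec n ((b' : ℕ) * (i : ℕ)))
        = (1 / (n:ℂ)) * ec n ((((b' : ℕ) - (b : ℕ) : ℤ)) * (i : ℕ)) := by
      intro i
      rw [show sqc n * ec n (-((b : ℕ) * (i : ℕ))) * (sqc n * ec n ((b' : ℕ) * (i : ℕ)))
        = (sqc n * sqc n) * (ec n (-((b : ℕ) * (i : ℕ))) * ec n ((b' : ℕ) * (i : ℕ)))
        from by ring]
      rw [sqc_mul_self, ec_mul]
      congr 2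
      ring
    rw [Finset.sum_congr rfl (fun i _ => hterm i), ← Finset.mul_sum, sum_ec]
    by_cases hbb : b = b'
    · subst hbb
      simp only [sub_self, Int.cast_zero, eq_self_iff_true, if_true]
      have hn : (n : ℂ) ≠ 0 := Nat.cast_ne_zero.mpr (NeZero.ne n)
      field_simp
    · have hm : ¬ ((((b' : ℕ) - (b : ℕ) : ℤ) : ZMod n) = 0) := by
        intro hc
        apply hbb
        apply fin_cast_inj
        push_cast at hc
        rw [sub_eq_zero] at hc
        exact hc.symm
      rw [if_neg hm, if_neg (by simp [Prod.ext_iff]; intro h; exact absurd h hbb)]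
      ring
  · rw [if_neg (by simp [Prod.ext_iff]; intro h; exact absurd h ha)]
    apply Finset.sum_eq_zero
    intro i _
    apply Finset.sum_eq_zero
    intro k _
    split_ifs with h1 h2
    · exact absurd (fin_cast_inj (sub_right_inj.mp (h1.symm.trans h2))).symm ha
    · rfl
    · rfl

lemma wmat_inner {n : ℕ} [NeZero n] (a b a' b' : Fin n) :
    (∑ p : Fin n × Fin n, (starRingEnd ℂ) (wmat n p (a, b)) * wmat n p (a', b'))
      = if (a, b) = (a', b') then 1 else 0 := by
  simp only [wmat, Matrix.of_apply, apply_ite (starRingEnd ℂ), map_zero, _root_.map_mul,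
    sqc_conj, ec_conj, ite_mul, mul_ite, zero_mul, mul_zero]
  rw [Fintype.sum_prod_type]
  dsimp only
  by_cases ha : a = a'
  · subst ha
    simp only [← ite_and, and_self, neg_neg]
    rw [Finset.sum_congr rfl (fun i _ => sumCollapse _ _)]
    have hterm : ∀ i : Fin n,
        sqc n * ec n ((b : ℕ) * (i : ℕ)) * (sqc n * ec n (-((b' : ℕ) * (i : ℕ))))
        = (1 / (n:ℂ)) * ec n ((((b : ℕ) - (b' : ℕ) : ℤ)) * (i : ℕ)) := by
      intro i
      rw [show sqc n * ec n ((b : ℕ) * (i : ℕ)) * (sqc n * ec n (-((b' : ℕ) * (i : ℕ))))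
        = (sqc n * sqc n) * (ec n ((b : ℕ) * (i : ℕ)) * ec n (-((b' : ℕ) * (i : ℕ))))
        from by ring]
      rw [sqc_mul_self, ec_mul]
      congr 2
      ring
    rw [Finset.sum_congr rfl (fun i _ => hterm i), ← Finset.mul_sum, sum_ec]
    by_cases hbb : b = b'
    · subst hbb
      simp only [sub_self, Int.cast_zero, eq_self_iff_true, if_true]
      have hn : (n : ℂ) ≠ 0 := Nat.cast_ne_zero.mpr (NeZero.ne n)
      field_simp
    · have hm : ¬ ((((b : ℕ) - (b' : ℕ) : ℤ) : ZMod n) = 0) := by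
        intro hc
        apply hbb
        apply fin_cast_inj
        push_cast at hc
        rw [sub_eq_zero] at hc
        exact hc
      rw [if_neg hm, if_neg (by simp [Prod.ext_iff]; intro h; exact absurd h hbb)]
      ring
  · rw [if_neg (by simp [Prod.ext_iff]; intro h; exact absurd h ha)]
    apply Finset.sum_eq_zero
    intro i _
    apply Finset.sum_eq_zero
    intro k _
    split_ifs with h1 h2
    · exact absurd (fin_cast_inj (sub_right_inj.mp (h1.symm.trans h2))).symm ha
    · rfl
    · rfl

lemma umat_star_mul {n : ℕ} [NeZero n] : star (umat n) * umat n = 1 := by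
  ext ab ab'
  rw [Matrix.mul_apply]
  simp only [Matrix.star_apply]
  rw [show (∑ p : Fin n × Fin n, star (umat n p ab) * umat n p ab')
      = ∑ p : Fin n × Fin n, (starRingEnd ℂ) (umat n p (ab.1, ab.2)) * umat n p (ab'.1, ab'.2)
      from rfl]
  rw [umat_inner, Matrix.one_apply]

lemma wmat_star_mul {n : ℕ} [NeZero n] : star (wmat n) * wmat n = 1 := by
  ext ab ab'
  rw [Matrix.mul_apply]
  simp only [Matrix.star_apply]
  rw [show (∑ p : Fin n × Fin n, star (wmat n p ab) * wmat n p ab')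
      = ∑ p : Fin n × Fin n, (starRingEnd ℂ) (wmat n p (ab.1, ab.2)) * wmat n p (ab'.1, ab'.2)
      from rfl]
  rw [wmat_inner, Matrix.one_apply]

lemma umat_det_isUnit {n : ℕ} [NeZero n] : IsUnit (umat n).det := by
  have h := umat_star_mul (n := n)
  have : (star (umat n)).det * (umat n).det = 1 := by
    rw [← Matrix.det_mul, h, Matrix.det_one]
  exact IsUnit.of_mul_eq_one _ (by rw [mul_comm] at this; exact this)

lemma wmat_det_isUnit {n : ℕ} [NeZero n] : IsUnit (wmat n).det := by
  have h := wmat_star_mul (n := n)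
  have : (star (wmat n)).det * (wmat n).det = 1 := by
    rw [← Matrix.det_mul, h, Matrix.det_one]
  exact IsUnit.of_mul_eq_one _ (by rw [mul_comm] at this; exact this)
lemma lamHat_eq {n : ℕ} (lam : Fin n → Fin n → ℂ) (a b : Fin n) :
    lamHat lam a b = ∑ x : Fin n, ∑ y : Fin n,
      (1 / (n:ℂ)) * ec n (((a : ℕ) * (x : ℕ) + (b : ℕ) * (y : ℕ) : ℤ)) * lam x y := by
  rw [lamHat, Finset.mul_sum]
  apply Finset.sum_congr rfl
  intro x _
  rw [Finset.mul_sum]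
  apply Finset.sum_congr rfl
  intro y _
  have he : Complex.exp (2 * Real.pi * Complex.I *
      ((a.val * x.val + b.val * y.val : ℕ) : ℂ) / n)
      = ec n (((a : ℕ) * (x : ℕ) + (b : ℕ) * (y : ℕ) : ℤ)) := by
    rw [ec]; congr 1
  rw [he]
  ring

noncomputable def mid {n : ℕ} [NeZero n] (lam : Fin n → Fin n → ℂ) (i k j l : Fin n) : ℂ :=
  if ((j : ℕ) : ZMod n) - ((i : ℕ) : ZMod n) = ((l : ℕ) : ZMod n) - ((k : ℕ) : ZMod n) then
    ∑ x : Fin n, lam x (finZ (((j : ℕ) : ZMod n) - ((i : ℕ) : ZMod n))) *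
      ((1 / (n:ℂ)) * ec n ((x : ℕ) * ((j : ℕ) - (l : ℕ) : ℤ)))
  else 0

lemma dlam_entry_eq_mid {n : ℕ} [NeZero n] (lam : Fin n → Fin n → ℂ) (i k j l : Fin n) :
    Dlam lam (i, j) (k, l) = mid lam i k j l := by
  rw [Dlam, Matrix.of_apply]
  have key : ∀ a b : Fin n,
      lam a b * fVec n a b (i, j) * (starRingEnd ℂ) (fVec n a b (k, l))
      = if ((b : ℕ) : ZMod n) = ((j : ℕ) : ZMod n) - ((i : ℕ) : ZMod n) then
          (if ((b : ℕ) : ZMod n) = ((l : ℕ) : ZMod n) - ((k : ℕ) : ZMod n) then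
            lam a b * ((1 / (n:ℂ)) * ec n ((a : ℕ) * ((j : ℕ) - (l : ℕ) : ℤ)))
          else 0)
        else 0 := by
    intro a b
    rw [fVec_eq, fVec_eq]
    simp only [apply_ite (starRingEnd ℂ), map_zero, _root_.map_mul, sqc_conj, ec_conj]
    have hiff1 : (((i : ℕ) : ZMod n) = ((j : ℕ) : ZMod n) - ((b : ℕ) : ZMod n))
        ↔ (((b : ℕ) : ZMod n) = ((j : ℕ) : ZMod n) - ((i : ℕ) : ZMod n)) := by
      constructor <;> intro h <;> linear_combination h
    have hiff2 : (((k : ℕ) : ZMod n) = ((l : ℕ) : ZMod n) - ((b : ℕ) : ZMod n))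
        ↔ (((b : ℕ) : ZMod n) = ((l : ℕ) : ZMod n) - ((k : ℕ) : ZMod n)) := by
      constructor <;> intro h <;> linear_combination h
    rw [if_congr hiff1 rfl rfl, if_congr hiff2 rfl rfl]
    split_ifs with h1 h2
    · rw [show lam a b * (sqc n * ec n ((a : ℕ) * (((i,j).2 : ℕ) - (b : ℕ) : ℤ))) *
          (sqc n * ec n (-((a : ℕ) * (((k,l).2 : ℕ) - (b : ℕ) : ℤ))))
        = lam a b * ((sqc n * sqc n) * (ec n ((a : ℕ) * ((j : ℕ) - (b : ℕ) : ℤ)) *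
            ec n (-((a : ℕ) * ((l : ℕ) - (b : ℕ) : ℤ))))) from by ring]
      rw [sqc_mul_self, ec_mul]
      rw [show ((a : ℕ) * ((j : ℕ) - (b : ℕ) : ℤ) + -((a : ℕ) * ((l : ℕ) - (b : ℕ) : ℤ)))
        = ((a : ℕ) * ((j : ℕ) - (l : ℕ) : ℤ)) from by ring]
    all_goals ring
  rw [Finset.sum_congr rfl (fun a _ => Finset.sum_congr rfl (fun b _ => key a b))]
  rw [Finset.sum_congr rfl (fun a _ => sumCollapse _ _)]
  simp only [finZ_cast]
  rw [mid]
  by_cases hc : ((j : ℕ) : ZMod n) - ((i : ℕ) : ZMod n) = ((l : ℕ) : ZMod n) - ((k : ℕ) : ZMod n)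
  · simp only [if_pos hc]
  · simp only [if_neg hc, Finset.sum_const_zero]
lemma sum_ite_ite {P Q : Prop} [Decidable P] [Decidable Q] {α : Type*} [Fintype α]
    (H : α → ℂ) :
    (∑ b : α, if P then (if Q then H b else 0) else 0)
    = if P then (if Q then ∑ b : α, H b else 0) else 0 := by
  split_ifs <;> simp

lemma dft_sum {n : ℕ} [NeZero n] (lam : Fin n → Fin n → ℂ) (i k j l : Fin n)
    (hc : ((j : ℕ) : ZMod n) - ((i : ℕ) : ZMod n) = ((l : ℕ) : ZMod n) - ((k : ℕ) : ZMod n)) :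
    (∑ b : Fin n, sqc n * ec n ((b : ℕ) * (i : ℕ)) *
        lamHat lam (finZ (((i : ℕ) : ZMod n) - ((k : ℕ) : ZMod n))) b *
        (sqc n * ec n (-((b : ℕ) * (j : ℕ)))))
    = ∑ x : Fin n, lam x (finZ (((j : ℕ) : ZMod n) - ((i : ℕ) : ZMod n))) *
        ((1 / (n:ℂ)) * ec n ((x : ℕ) * ((j : ℕ) - (l : ℕ) : ℤ))) := by
  have step1 : ∀ b : Fin n,
      sqc n * ec n ((b : ℕ) * (i : ℕ)) *
        lamHat lam (finZ (((i : ℕ) : ZMod n) - ((k : ℕ) : ZMod n))) b *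
        (sqc n * ec n (-((b : ℕ) * (j : ℕ))))
      = ∑ x : Fin n, ∑ y : Fin n,
          ((1 / (n:ℂ)) * (1 / n) *
            ec n (((finZ (((i : ℕ) : ZMod n) - ((k : ℕ) : ZMod n)) : Fin n) : ℕ) * (x : ℕ)) *
              lam x y) *
            ec n ((((y : ℕ) : ℤ) + (i : ℕ) - (j : ℕ)) * (b : ℕ)) := by
    intro b
    rw [lamHat_eq, Finset.mul_sum, Finset.sum_mul]
    apply Finset.sum_congr rfl
    intro x _
    rw [Finset.mul_sum, Finset.sum_mul]
    apply Finset.sum_congr rfl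
    intro y _
    have h1 : sqc n * ec n ((b : ℕ) * (i : ℕ)) *
        ((1 / (n:ℂ)) * ec n ((((finZ (((i : ℕ) : ZMod n) - ((k : ℕ) : ZMod n)) : Fin n) : ℕ)
            * (x : ℕ) + (b : ℕ) * (y : ℕ) : ℤ)) * lam x y) *
        (sqc n * ec n (-((b : ℕ) * (j : ℕ))))
      = ((sqc n * sqc n) * ((1 / (n:ℂ)) * lam x y)) *
          (ec n ((b : ℕ) * (i : ℕ)) *
            ec n ((((finZ (((i : ℕ) : ZMod n) - ((k : ℕ) : ZMod n)) : Fin n) : ℕ)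
              * (x : ℕ) + (b : ℕ) * (y : ℕ) : ℤ)) *
            ec n (-((b : ℕ) * (j : ℕ)))) := by ring
    rw [h1, sqc_mul_self, ec_mul, ec_mul]
    have h2 : ((b : ℕ) * (i : ℕ) : ℤ) +
        (((finZ (((i : ℕ) : ZMod n) - ((k : ℕ) : ZMod n)) : Fin n) : ℕ)
          * (x : ℕ) + (b : ℕ) * (y : ℕ) : ℤ) + -((b : ℕ) * (j : ℕ) : ℤ)
      = ((((finZ (((i : ℕ) : ZMod n) - ((k : ℕ) : ZMod n)) : Fin n) : ℕ) * (x : ℕ) : ℤ)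
        + (((y : ℕ) : ℤ) + (i : ℕ) - (j : ℕ)) * ((b : ℕ) : ℤ)) := by push_cast; ring
    rw [h2, ← ec_mul]
    ring
  rw [Finset.sum_congr rfl (fun b _ => step1 b), Finset.sum_comm]
  rw [Finset.sum_congr rfl (fun x _ => Finset.sum_comm)]
  apply Finset.sum_congr rfl
  intro x _
  have step2 : ∀ y : Fin n,
      (∑ b : Fin n, ((1 / (n:ℂ)) * (1 / n) *
        ec n (((finZ (((i : ℕ) : ZMod n) - ((k : ℕ) : ZMod n)) : Fin n) : ℕ) * (x : ℕ)) *
          lam x y) *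
        ec n ((((y : ℕ) : ℤ) + (i : ℕ) - (j : ℕ)) * (b : ℕ)))
      = if ((y : ℕ) : ZMod n) = ((j : ℕ) : ZMod n) - ((i : ℕ) : ZMod n) then
          lam x y * ((1 / (n:ℂ)) * ec n ((x : ℕ) * ((j : ℕ) - (l : ℕ) : ℤ))) else 0 := by
    intro y
    rw [← Finset.mul_sum, sum_ec]
    have himod : ((((((y : ℕ) : ℤ) + (i : ℕ) - (j : ℕ)) : ℤ) : ZMod n) = 0)
        ↔ (((y : ℕ) : ZMod n) = ((j : ℕ) : ZMod n) - ((i : ℕ) : ZMod n)) := by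
      push_cast
      constructor <;> intro h <;> linear_combination h
    rw [mul_ite, mul_zero, if_congr himod rfl rfl]
    by_cases hy : ((y : ℕ) : ZMod n) = ((j : ℕ) : ZMod n) - ((i : ℕ) : ZMod n)
    · rw [if_pos hy, if_pos hy]
      have he : ec n (((finZ (((i : ℕ) : ZMod n) - ((k : ℕ) : ZMod n)) : Fin n) : ℕ) * (x : ℕ))
          = ec n ((x : ℕ) * ((j : ℕ) - (l : ℕ) : ℤ)) := by
        apply ec_congr
        push_cast
        rw [finZ_cast]
        linear_combination (-(((x : ℕ) : ZMod n))) * hc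
      rw [he]
      have hn : (n : ℂ) ≠ 0 := Nat.cast_ne_zero.mpr (NeZero.ne n)
      field_simp
    · rw [if_neg hy, if_neg hy]
  rw [Finset.sum_congr rfl (fun y _ => step2 y)]
  rw [sumCollapse]
lemma uw_entry_eq_mid {n : ℕ} [NeZero n] (lam : Fin n → Fin n → ℂ) (i k j l : Fin n) :
    (umat n * Matrix.diagonal (fun ab : Fin n × Fin n => lamHat lam ab.1 ab.2) * (wmat n)ᵀ)
      (i, k) (j, l) = mid lam i k j l := by
  rw [Matrix.mul_apply]
  simp only [Matrix.mul_diagonal, Matrix.transpose_apply, umat, wmat, Matrix.of_apply]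
  rw [Fintype.sum_prod_type]
  dsimp only
  have key : ∀ a b : Fin n,
      ((if ((k : ℕ) : ZMod n) = ((i : ℕ) : ZMod n) - ((a : ℕ) : ZMod n) then
          sqc n * ec n ((b : ℕ) * (i : ℕ)) else 0) * lamHat lam a b) *
        (if ((l : ℕ) : ZMod n) = ((j : ℕ) : ZMod n) - ((a : ℕ) : ZMod n) then
          sqc n * ec n (-((b : ℕ) * (j : ℕ))) else 0)
      = if ((a : ℕ) : ZMod n) = ((i : ℕ) : ZMod n) - ((k : ℕ) : ZMod n) then
          (if ((a : ℕ) : ZMod n) = ((j : ℕ) : ZMod n) - ((l : ℕ) : ZMod n) then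
            sqc n * ec n ((b : ℕ) * (i : ℕ)) * lamHat lam a b *
              (sqc n * ec n (-((b : ℕ) * (j : ℕ))))
          else 0)
        else 0 := by
    intro a b
    have hiff1 : (((k : ℕ) : ZMod n) = ((i : ℕ) : ZMod n) - ((a : ℕ) : ZMod n))
        ↔ (((a : ℕ) : ZMod n) = ((i : ℕ) : ZMod n) - ((k : ℕ) : ZMod n)) := by
      constructor <;> intro h <;> linear_combination h
    have hiff2 : (((l : ℕ) : ZMod n) = ((j : ℕ) : ZMod n) - ((a : ℕ) : ZMod n))
        ↔ (((a : ℕ) : ZMod n) = ((j : ℕ) : ZMod n) - ((l : ℕ) : ZMod n)) := by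
      constructor <;> intro h <;> linear_combination h
    rw [if_congr hiff1 rfl rfl, if_congr hiff2 rfl rfl]
    split_ifs <;> ring
  rw [Finset.sum_congr rfl (fun a _ => Finset.sum_congr rfl (fun b _ => key a b))]
  rw [Finset.sum_congr rfl (fun a _ => sum_ite_ite _)]
  rw [sumCollapse]
  simp only [finZ_cast]
  have hciff : (((i : ℕ) : ZMod n) - ((k : ℕ) : ZMod n) = ((j : ℕ) : ZMod n) - ((l : ℕ) : ZMod n))
      ↔ (((j : ℕ) : ZMod n) - ((i : ℕ) : ZMod n) = ((l : ℕ) : ZMod n) - ((k : ℕ) : ZMod n)) := by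
    constructor <;> intro h <;> linear_combination -h
  rw [if_congr hciff rfl rfl, mid]
  by_cases hc : ((j : ℕ) : ZMod n) - ((i : ℕ) : ZMod n) = ((l : ℕ) : ZMod n) - ((k : ℕ) : ZMod n)
  · rw [if_pos hc, if_pos hc]
    exact dft_sum lam i k j l hc
  · rw [if_neg hc, if_neg hc]

lemma realign_dlam {n : ℕ} [NeZero n] (lam : Fin n → Fin n → ℂ) :
    realign (Dlam lam)
      = umat n * Matrix.diagonal (fun ab : Fin n × Fin n => lamHat lam ab.1 ab.2) * (wmat n)ᵀ := by
  ext ⟨i, k⟩ ⟨j, l⟩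
  show Dlam lam (i, j) (k, l) = _
  rw [dlam_entry_eq_mid, ← uw_entry_eq_mid]
lemma ncard_eq_card {n : ℕ} (lam : Fin n → Fin n → ℂ) [DecidableEq ℂ] :
    {ab : Fin n × Fin n | lamHat lam ab.1 ab.2 ≠ 0}.ncard
      = Fintype.card {ab : Fin n × Fin n // lamHat lam ab.1 ab.2 ≠ 0} := by
  classical
  rw [Set.ncard_eq_toFinset_card', Set.toFinset_setOf, Fintype.card_subtype]

lemma osr_dlam {n : ℕ} [NeZero n] (lam : Fin n → Fin n → ℂ) :
    osr (Dlam lam) = {ab : Fin n × Fin n | lamHat lam ab.1 ab.2 ≠ 0}.ncard := by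
  classical
  rw [osr, realign_dlam]
  rw [Matrix.rank_mul_eq_left_of_isUnit_det ((wmat n)ᵀ) _
    (by rw [Matrix.det_transpose]; exact wmat_det_isUnit)]
  rw [Matrix.rank_mul_eq_right_of_isUnit_det (umat n) _ umat_det_isUnit]
  rw [Matrix.rank_diagonal]
  rw [ncard_eq_card]

theorem stmt18' {n : ℕ} (lam : Fin n → Fin n → ℂ)
    (hlam : ∀ a b, ‖lam a b‖ = 1) :
    Orthonormal ℂ (fun ab : Fin n × Fin n =>
      ((WithLp.equiv 2 (Fin n × Fin n → ℂ)).symm (fVec n ab.1 ab.2) : EuclideanSpace ℂ (Fin n × Fin n))) ∧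
    Submodule.span ℂ (Set.range (fun ab : Fin n × Fin n =>
      ((WithLp.equiv 2 (Fin n × Fin n → ℂ)).symm (fVec n ab.1 ab.2) : EuclideanSpace ℂ (Fin n × Fin n)))) = ⊤ ∧
    Dlam lam ∈ Matrix.unitaryGroup (Fin n × Fin n) ℂ ∧
    osr (Dlam lam) = {ab : Fin n × Fin n | lamHat lam ab.1 ab.2 ≠ 0}.ncard := by
  classical
  rcases Nat.eq_zero_or_pos n with hn | hn
  · subst hn
    haveI : Subsingleton (EuclideanSpace ℂ (Fin 0 × Fin 0)) :=
      ⟨fun a b => PiLp.ext fun i => i.1.elim0⟩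
    refine ⟨?_, ?_, ?_, ?_⟩
    · rw [orthonormal_iff_ite]
      intro i
      exact i.1.elim0
    · exact Subsingleton.elim _ _
    · rw [Matrix.mem_unitaryGroup_iff]
      exact Subsingleton.elim _ _
    · have h1 : osr (Dlam lam) = 0 := by
        rw [osr]
        have := Matrix.rank_le_card_width (realign (Dlam lam))
        simp at this
        omega
      have h2 : {ab : Fin 0 × Fin 0 | lamHat lam ab.1 ab.2 ≠ 0} = ∅ := by
        ext ab
        exact ab.1.elim0
      rw [h1, h2, Set.ncard_empty]
  · haveI : NeZero n := ⟨hn.ne'⟩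
    refine ⟨fVec_orthonormal, ?_, dlam_unitary lam hlam, osr_dlam lam⟩
    apply LinearIndependent.span_eq_top_of_card_eq_finrank' fVec_orthonormal.linearIndependent
    rw [finrank_euclideanSpace]

/-- Tyson's Fourier construction: `{v_{α,β}}` is an orthonormal basis, `D_λ` is
unitary, and its operator Schmidt rank is the number of nonvanishing Fourier
coefficients of `λ`. -/
theorem stmt18 {n : ℕ} (lam : Fin n → Fin n → ℂ)
    (hlam : ∀ a b, ‖lam a b‖ = 1) :
    Orthonormal ℂ (fun ab : Fin n × Fin n =>
      ((WithLp.equiv 2 (Fin n × Fin n → ℂ)).symm (fVec n ab.1 ab.2) : EuclideanSpace ℂ (Fin n × Fin n))) ∧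
    Submodule.span ℂ (Set.range (fun ab : Fin n × Fin n =>
      ((WithLp.equiv 2 (Fin n × Fin n → ℂ)).symm (fVec n ab.1 ab.2) : EuclideanSpace ℂ (Fin n × Fin n)))) = ⊤ ∧
    Dlam lam ∈ Matrix.unitaryGroup (Fin n × Fin n) ℂ ∧
    osr (Dlam lam) = {ab : Fin n × Fin n | lamHat lam ab.1 ab.2 ≠ 0}.ncard := by
  exact stmt18' lam hlam
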